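/- arXiv:2601.19678 — 3 statements merged into one kernel-verified Lean document; each statement's English description precedes it below -/
import Mathlib

section
/- Suppose the complex composition operator T_f on L^p(X;ℂ) is supercyclic. Then the real composition operator T̃_f on L^p(X;ℝ) is ℝ-supercyclic, i.e., there exists ψ ∈ L^p(X;ℝ) such that {λ · (ψ ∘ f^k) : λ ∈ ℝ, k ∈ ℕ} is dense in L^p(X;ℝ). -/
open MeasureTheory Filter
open scoped ENNReal NNReal Topology

lemma comp_ae_eq {X : Type*} [MeasurableSpace X] {μ : Measure X} {f : X → X}
    (hns : ∀ B : Set X, MeasurableSet B → μ B = 0 → μ (f ⁻¹' B) = 0)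
    {α : Type*} {g₁ g₂ : X → α} (h : g₁ =ᵐ[μ] g₂) : (g₁ ∘ f) =ᵐ[μ] (g₂ ∘ f) := by
  have h0 : μ {x | g₁ x ≠ g₂ x} = 0 := h
  obtain ⟨B, hNB, hBm, hB0⟩ := exists_measurable_superset_of_null h0
  have h1 : μ (f ⁻¹' B) = 0 := hns B hBm hB0
  have h2 : {x | ¬ (g₁ ∘ f) x = (g₂ ∘ f) x} ⊆ f ⁻¹' B := fun x hx => hNB hx
  exact measure_mono_null h2 h1

lemma unit_re_zero_sq {z : ℂ} (h1 : ‖z‖ = 1) (h0 : z.re = 0) : z ^ 2 = -1 := by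
  have hns : Complex.normSq z = 1 := by
    rw [Complex.normSq_eq_norm_sq, h1]; norm_num
  have him : z.im * z.im = 1 := by
    have := Complex.normSq_apply z
    rw [h0] at this; nlinarith [hns]
  apply Complex.ext
  · simp [pow_two, Complex.mul_re, h0, him]
  · simp [pow_two, Complex.mul_im, h0]

lemma conj_unit_mul {c z₀ : ℂ} (hc : c ≠ 0) :
    (z₀ * (starRingEnd ℂ) (c / (‖c‖ : ℂ))) * c = (‖c‖ : ℂ) * z₀ := by
  have hcc : (starRingEnd ℂ) c * c = ((‖c‖:ℂ))^2 := by
    rw [mul_comm, Complex.mul_conj, Complex.normSq_eq_norm_sq]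
    push_cast; ring
  have hcn : ((‖c‖:ℝ):ℂ) ≠ 0 := by
    simpa using norm_ne_zero_iff.mpr hc
  rw [map_div₀, Complex.conj_ofReal]
  have h1 : z₀ * ((starRingEnd ℂ) c / ((‖c‖:ℝ):ℂ)) * c
      = (z₀ * ((starRingEnd ℂ) c * c)) / ((‖c‖:ℝ):ℂ) := by ring
  rw [h1, hcc, div_eq_iff hcn]
  ring

lemma zmap_inj {t s : ℝ} {w : ℂ} (hw : ‖w‖ = 1)
    (h1 : (Complex.exp (Real.arctan t * Complex.I) * (starRingEnd ℂ) w).re = 0)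
    (h2 : (Complex.exp (Real.arctan s * Complex.I) * (starRingEnd ℂ) w).re = 0) : t = s := by
  set zt := Complex.exp (Real.arctan t * Complex.I) with hzt
  set zs := Complex.exp (Real.arctan s * Complex.I) with hzs
  have hnt : ‖zt‖ = 1 := by
    rw [hzt, Complex.norm_exp_ofReal_mul_I]
  have hns : ‖zs‖ = 1 := by
    rw [hzs, Complex.norm_exp_ofReal_mul_I]
  have hwne : (starRingEnd ℂ) w ≠ 0 := by
    intro h0
    have : ‖(starRingEnd ℂ) w‖ = 1 := by rwa [RCLike.norm_conj]
    rw [h0] at this; simp at this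
  have e1 : (zt * (starRingEnd ℂ) w) ^ 2 = -1 :=
    unit_re_zero_sq (by rw [norm_mul, hnt, RCLike.norm_conj, hw, one_mul]) h1
  have e2 : (zs * (starRingEnd ℂ) w) ^ 2 = -1 :=
    unit_re_zero_sq (by rw [norm_mul, hns, RCLike.norm_conj, hw, one_mul]) h2
  have e3 : zt ^ 2 = zs ^ 2 := by
    have h4 : zt ^ 2 * ((starRingEnd ℂ) w) ^ 2 = zs ^ 2 * ((starRingEnd ℂ) w) ^ 2 := by
      rw [← mul_pow, ← mul_pow, e1, e2]
    exact mul_right_cancel₀ (pow_ne_zero 2 hwne) h4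
  have e4 : Complex.exp (2 * Real.arctan t * Complex.I) =
      Complex.exp (2 * Real.arctan s * Complex.I) := by
    have l1 : ∀ u : ℝ, Complex.exp (u * Complex.I) ^ 2
        = Complex.exp (2 * u * Complex.I) := by
      intro u
      rw [pow_two, ← Complex.exp_add]
      ring_nf
    rw [← l1, ← l1]
    exact e3
  obtain ⟨k, hk⟩ := Complex.exp_eq_exp_iff_exists_int.mp e4
  have hk' : ((2 * Real.arctan t : ℝ) : ℂ) = ((2 * Real.arctan s + k * (2 * Real.pi) : ℝ) : ℂ) := by
    apply mul_right_cancel₀ Complex.I_ne_zero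
    push_cast [-Complex.ofReal_arctan]
    linear_combination hk
  have him : 2 * Real.arctan t = 2 * Real.arctan s + k * (2 * Real.pi) := by
    exact_mod_cast hk'
  have hbt := Real.arctan_lt_pi_div_two t
  have hbt' := Real.neg_pi_div_two_lt_arctan t
  have hbs := Real.arctan_lt_pi_div_two s
  have hbs' := Real.neg_pi_div_two_lt_arctan s
  have hpi := Real.pi_pos
  have hk0 : k = 0 := by
    by_contra hkne
    have h1' : (1:ℝ) ≤ |(k:ℝ)| := by
      have : (1:ℤ) ≤ |k| := Int.one_le_abs hkne
      exact_mod_cast this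
    have hlt : |2 * Real.arctan t - 2 * Real.arctan s| < 2 * Real.pi := by
      rw [abs_lt]; constructor <;> nlinarith
    rw [him] at hlt
    have h2' : |2 * Real.arctan s + ↑k * (2 * Real.pi) - 2 * Real.arctan s|
        = |(k:ℝ)| * (2 * Real.pi) := by
      rw [show 2 * Real.arctan s + ↑k * (2 * Real.pi) - 2 * Real.arctan s
          = ↑k * (2 * Real.pi) by ring, abs_mul,
        abs_of_pos (show (0:ℝ) < 2 * Real.pi by positivity)]
    rw [h2'] at hlt
    nlinarith
  rw [hk0] at him
  simp at him
  exact him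

set_option maxHeartbeats 1000000 in
/-- If the complex composition operator `T_f` on `L^p(X;ℂ)` is supercyclic,
then the real composition operator `T̃_f` on `L^p(X;ℝ)` is `ℝ`-supercyclic. -/
theorem stmt1 {X : Type*} [MeasurableSpace X] (μ : Measure X) [SigmaFinite μ]
    (f : X → X) (hf : Measurable f)
    (hns : ∀ B : Set X, MeasurableSet B → μ B = 0 → μ (f ⁻¹' B) = 0)
    (p : ℝ≥0∞) [Fact (1 ≤ p)] (hp2 : p ≠ ⊤)
    (Tc : Lp ℂ p μ →L[ℂ] Lp ℂ p μ)
    (hTc : ∀ φ : Lp ℂ p μ, (Tc φ : X → ℂ) =ᵐ[μ] (φ : X → ℂ) ∘ f)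
    (Tr : Lp ℝ p μ →L[ℝ] Lp ℝ p μ)
    (hTr : ∀ φ : Lp ℝ p μ, (Tr φ : X → ℝ) =ᵐ[μ] (φ : X → ℝ) ∘ f)
    (hsc : ∃ φ : Lp ℂ p μ,
      Dense {y : Lp ℂ p μ | ∃ (c : ℂ) (n : ℕ), 1 ≤ n ∧ y = c • ((Tc ^ n) φ)}) :
    ∃ ψ : Lp ℝ p μ,
      Dense {y : Lp ℝ p μ | ∃ (l : ℝ) (k : ℕ), 1 ≤ k ∧ y = l • ((Tr ^ k) ψ)} := by
  classical
  obtain ⟨φ, hφ⟩ := hsc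
  set R : Lp ℂ p μ →L[ℝ] Lp ℝ p μ := ContinuousLinearMap.compLpL p μ Complex.reCLM with hR
  set J : Lp ℝ p μ →L[ℝ] Lp ℂ p μ := ContinuousLinearMap.compLpL p μ Complex.ofRealCLM with hJ
  -- commutation of Tr with the real part of Tc
  have hcomm : ∀ h : Lp ℂ p μ, Tr (R h) = R (Tc h) := by
    intro h
    apply Lp.ext
    have e2 : ⇑(R h) =ᵐ[μ] fun a => Complex.reCLM (h a) :=
      ContinuousLinearMap.coeFn_compLpL Complex.reCLM h
    have e3 : (⇑(R h)) ∘ f =ᵐ[μ] (fun a => Complex.reCLM (h a)) ∘ f := comp_ae_eq hns e2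
    have e4 : ⇑(Tc h) =ᵐ[μ] (⇑h) ∘ f := hTc h
    have e5 : ⇑(R (Tc h)) =ᵐ[μ] fun a => Complex.reCLM ((Tc h) a) :=
      ContinuousLinearMap.coeFn_compLpL Complex.reCLM (Tc h)
    have e6 : (fun a => Complex.reCLM ((Tc h) a)) =ᵐ[μ] fun a => Complex.reCLM (h (f a)) :=
      e4.mono fun x hx => by simp only [hx]; rfl
    calc ⇑(Tr (R h)) =ᵐ[μ] (⇑(R h)) ∘ f := hTr (R h)
      _ =ᵐ[μ] (fun a => Complex.reCLM (h a)) ∘ f := e3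
      _ =ᵐ[μ] fun a => Complex.reCLM ((Tc h) a) := e6.symm
      _ =ᵐ[μ] ⇑(R (Tc h)) := e5.symm
  have hcommk : ∀ (k : ℕ) (h : Lp ℂ p μ), (Tr ^ k) (R h) = R ((Tc ^ k) h) := by
    intro k
    induction k with
    | zero => intro h; simp
    | succ k ih =>
      intro h
      rw [pow_succ, pow_succ]
      rw [ContinuousLinearMap.mul_apply, ContinuousLinearMap.mul_apply, hcomm, ih (Tc h)]
  -- real part of a rotated real function
  have hRJ : ∀ (z : ℂ) (g : Lp ℝ p μ), R (z • J g) = z.re • g := by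
    intro z g
    apply Lp.ext
    have e1 : ⇑(R (z • J g)) =ᵐ[μ] fun a => Complex.reCLM ((z • J g) a) :=
      ContinuousLinearMap.coeFn_compLpL Complex.reCLM (z • J g)
    have e2 : ⇑(z • J g) =ᵐ[μ] z • ⇑(J g) := Lp.coeFn_smul z (J g)
    have e3 : ⇑(J g) =ᵐ[μ] fun a => Complex.ofRealCLM (g a) :=
      ContinuousLinearMap.coeFn_compLpL Complex.ofRealCLM g
    have e4 : ⇑(z.re • g) =ᵐ[μ] z.re • ⇑g := Lp.coeFn_smul z.re g
    filter_upwards [e1, e2, e3, e4] with x h1 h2 h3 h4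
    rw [h1, h4, h2]
    simp only [Pi.smul_apply, h3]
    simp [Complex.mul_re]
  have hRnorm : ∀ h : Lp ℂ p μ, ‖R h‖ ≤ ‖h‖ := by
    intro h
    calc ‖R h‖ ≤ ‖R‖ * ‖h‖ := R.le_opNorm h
      _ ≤ 1 * ‖h‖ := by
          apply mul_le_mul_of_nonneg_right ?_ (norm_nonneg h)
          rw [hR]
          refine le_trans (ContinuousLinearMap.norm_compLpL_le _) ?_
          simp [Complex.reCLM_norm]
      _ = ‖h‖ := one_mul _
  have hJid : ∀ g : Lp ℝ p μ, R (J g) = g := by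
    intro g
    have := hRJ 1 g
    simpa using this
  -- the candidate vectors and orbit sets
  set ψf : ℂ → Lp ℝ p μ := fun z => R (z • φ) with hψf
  set S : ℂ → Set (Lp ℝ p μ) :=
    fun z => {y | ∃ (l : ℝ) (k : ℕ), 1 ≤ k ∧ y = l • ((Tr ^ k) (ψf z))} with hS
  have h0S : ∀ z, (0 : Lp ℝ p μ) ∈ S z := fun z => ⟨0, 1, le_refl 1, by simp⟩
  -- the key estimate
  have hkey : ∀ (g : Lp ℝ p μ) (c : ℂ) (n : ℕ), c ≠ 0 → ∀ z₀ : ℂ, ‖z₀‖ = 1 →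
      ‖(‖c‖ • ((Tr ^ n) (ψf z₀))) - ((z₀ * (starRingEnd ℂ) (c / (‖c‖ : ℂ))).re • g)‖
        ≤ ‖c • ((Tc ^ n) φ) - J g‖ := by
    intro g c n hc z₀ hz₀
    have hwnorm : ‖c / (‖c‖ : ℂ)‖ = 1 := by
      rw [norm_div]
      simp [hc]
    set z : ℂ := z₀ * (starRingEnd ℂ) (c / (‖c‖ : ℂ)) with hz
    have hznorm : ‖z‖ = 1 := by
      rw [hz, norm_mul, hz₀, RCLike.norm_conj, hwnorm, one_mul]
    have e1 : R (z • (c • ((Tc ^ n) φ) - J g)) = (‖c‖ • ((Tr ^ n) (ψf z₀))) - (z.re • g) := by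
      rw [smul_sub, map_sub, hRJ]
      congr 1
      rw [smul_smul, hz, conj_unit_mul hc, mul_smul]
      rw [show ((‖c‖:ℝ):ℂ) = algebraMap ℝ ℂ ‖c‖ from rfl, algebraMap_smul]
      rw [R.map_smul]
      congr 1
      rw [← (Tc ^ n).map_smul z₀ φ, hcommk]
    calc ‖(‖c‖ • ((Tr ^ n) (ψf z₀))) - (z.re • g)‖
        = ‖R (z • (c • ((Tc ^ n) φ) - J g))‖ := by rw [e1]
      _ ≤ ‖z • (c • ((Tc ^ n) φ) - J g)‖ := hRnorm _
      _ = ‖z‖ * ‖c • ((Tc ^ n) φ) - J g‖ := norm_smul z _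
      _ = ‖c • ((Tc ^ n) φ) - J g‖ := by rw [hznorm, one_mul]
  -- Step E : for every nonzero g there is a unit direction w such that g is in the closure of
  -- the scaled orbit of ψf z₀ for every unit z₀ not orthogonal to w
  have hE : ∀ g : Lp ℝ p μ, g ≠ 0 → ∃ w : ℂ, ‖w‖ = 1 ∧
      ∀ z₀ : ℂ, ‖z₀‖ = 1 → (z₀ * (starRingEnd ℂ) w).re ≠ 0 → g ∈ closure (S z₀) := by
    intro g hg
    have hJg : 0 < ‖J g‖ := by
      rw [norm_pos_iff]
      intro h0
      exact hg (by rw [← hJid g, h0, map_zero])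
    -- approximations
    have hap : ∀ m : ℕ, ∃ (c : ℂ) (n : ℕ), 1 ≤ n ∧
        ‖c • ((Tc ^ n) φ) - J g‖ < ‖J g‖ / (m + 1) := by
      intro m
      have hpos : (0:ℝ) < ‖J g‖ / (m + 1) := by positivity
      obtain ⟨y, hy, hd⟩ := Metric.mem_closure_iff.mp (hφ.closure_eq ▸ Set.mem_univ (J g) :
        J g ∈ closure {y : Lp ℂ p μ | ∃ (c : ℂ) (n : ℕ), 1 ≤ n ∧ y = c • ((Tc ^ n) φ)}) _ hpos
      obtain ⟨c, n, hn, rfl⟩ := hy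
      refine ⟨c, n, hn, ?_⟩
      rwa [dist_comm, dist_eq_norm] at hd
    choose c n hn hlt using hap
    have hc0 : ∀ m, c m ≠ 0 := by
      intro m hcm
      have := hlt m
      rw [hcm, zero_smul, zero_sub, norm_neg] at this
      have h2 : ‖J g‖ / (m + 1) ≤ ‖J g‖ := by
        apply div_le_self (le_of_lt hJg)
        exact le_add_of_nonneg_left (Nat.cast_nonneg m)
      linarith
    set w : ℕ → ℂ := fun m => c m / (‖c m‖ : ℂ) with hwdef
    have hw1 : ∀ m, w m ∈ Metric.sphere (0:ℂ) 1 := by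
      intro m
      rw [mem_sphere_zero_iff_norm, hwdef, norm_div]
      simp [hc0 m]
    obtain ⟨wst, hwst, σ, hσ, hconv⟩ := (isCompact_sphere (0:ℂ) 1).tendsto_subseq hw1
    refine ⟨wst, mem_sphere_zero_iff_norm.mp hwst, ?_⟩
    intro z₀ hz₀ hre
    rw [Metric.mem_closure_iff]
    intro ε hε
    set r : ℝ := (z₀ * (starRingEnd ℂ) wst).re with hrdef
    have hrpos : 0 < |r| := abs_pos.mpr hre
    have hfc : Continuous fun u : ℂ => (z₀ * (starRingEnd ℂ) u).re := by
      apply Complex.continuous_re.comp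
      exact continuous_const.mul (Complex.continuous_conj)
    have hrconv : Tendsto (fun j => (z₀ * (starRingEnd ℂ) (w (σ j))).re) atTop (𝓝 r) :=
      (hfc.tendsto wst).comp hconv
    have hev1 : ∀ᶠ j in atTop, |r| / 2 < |(z₀ * (starRingEnd ℂ) (w (σ j))).re| := by
      have habs : Tendsto (fun j => |(z₀ * (starRingEnd ℂ) (w (σ j))).re|) atTop (𝓝 |r|) :=
        (continuous_abs.tendsto r).comp hrconv
      exact habs.eventually (eventually_gt_nhds (by linarith))
    obtain ⟨M, hM⟩ := exists_nat_gt (‖J g‖ / (ε * (|r| / 2)))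
    have hev2 : ∀ᶠ j in atTop, (M : ℕ) ≤ j := eventually_ge_atTop M
    obtain ⟨j, hj1, hj2⟩ := (hev1.and hev2).exists
    set m := σ j with hm
    set rj : ℝ := (z₀ * (starRingEnd ℂ) (w m)).re with hrj
    have hrjpos : 0 < |rj| := lt_trans (by positivity) hj1
    have hrjne : rj ≠ 0 := by
      intro h
      rw [h, abs_zero] at hrjpos
      exact lt_irrefl 0 hrjpos
    -- the estimate
    have hest : ‖(‖c m‖ • ((Tr ^ (n m)) (ψf z₀))) - (rj • g)‖ < ‖J g‖ / (m + 1) :=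
      lt_of_le_of_lt (hkey g (c m) (n m) (hc0 m) z₀ hz₀) (hlt m)
    refine ⟨(rj⁻¹ * ‖c m‖) • ((Tr ^ (n m)) (ψf z₀)), ⟨rj⁻¹ * ‖c m‖, n m, hn m, rfl⟩, ?_⟩
    rw [dist_eq_norm]
    have e2 : g - (rj⁻¹ * ‖c m‖) • ((Tr ^ (n m)) (ψf z₀))
        = rj⁻¹ • ((rj • g) - (‖c m‖ • ((Tr ^ (n m)) (ψf z₀)))) := by
      rw [smul_sub, smul_smul, inv_mul_cancel₀ hrjne, one_smul, smul_smul]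
    rw [e2, norm_smul, norm_inv, Real.norm_eq_abs]
    have hb1 : ‖(rj • g) - (‖c m‖ • ((Tr ^ (n m)) (ψf z₀)))‖ < ‖J g‖ / (m + 1) := by
      rwa [← norm_neg, neg_sub]
    -- ‖J g‖/(m+1) ≤ ‖J g‖/(M+1) < ε * (|r|/2) < ε * |rj|
    have hmM : (M:ℝ) + 1 ≤ (m:ℝ) + 1 := by
      have : M ≤ m := le_trans hj2 (StrictMono.le_apply hσ)
      exact_mod_cast Nat.succ_le_succ this
    have hb2 : ‖J g‖ / (m + 1) ≤ ‖J g‖ / (M + 1) := by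
      apply div_le_div_of_nonneg_left (le_of_lt hJg) (by positivity) hmM
    have hb3 : ‖J g‖ / (M + 1) < ε * (|r| / 2) := by
      rw [div_lt_iff₀ (by positivity)]
      have hM' : ‖J g‖ / (ε * (|r| / 2)) < M + 1 := lt_trans hM (by linarith)
      calc ‖J g‖ = (‖J g‖ / (ε * (|r| / 2))) * (ε * (|r| / 2)) := by
            field_simp
        _ < (M + 1) * (ε * (|r| / 2)) := by
            apply mul_lt_mul_of_pos_right hM' (by positivity)
        _ = ε * (|r| / 2) * (M + 1) := by ring
    calc |rj|⁻¹ * ‖(rj • g) - (‖c m‖ • ((Tr ^ (n m)) (ψf z₀)))‖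
        < |rj|⁻¹ * (ε * (|r| / 2)) := by
          apply mul_lt_mul_of_pos_left _ (by positivity)
          exact lt_of_lt_of_le (lt_of_lt_of_le hb1 hb2) (le_of_lt hb3)
      _ ≤ |rj|⁻¹ * (ε * |rj|) := by
          apply mul_le_mul_of_nonneg_left _ (by positivity)
          apply mul_le_mul_of_nonneg_left (le_of_lt hj1) (le_of_lt hε)
      _ = ε := by field_simp
  -- separability of the target space
  have hsepC : TopologicalSpace.SeparableSpace (Lp ℂ p μ) := by
    have h1 : TopologicalSpace.IsSeparable
        (⋃ n : ℕ, Set.range (fun c : ℂ => c • ((Tc ^ n) φ))) := by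
      rw [TopologicalSpace.isSeparable_iUnion]
      intro n
      exact TopologicalSpace.isSeparable_range (continuous_id.smul continuous_const)
    have h2 : {y : Lp ℂ p μ | ∃ (c : ℂ) (n : ℕ), 1 ≤ n ∧ y = c • ((Tc ^ n) φ)}
        ⊆ ⋃ n : ℕ, Set.range (fun c : ℂ => c • ((Tc ^ n) φ)) := by
      rintro y ⟨cc, nn, hnn, rfl⟩
      exact Set.mem_iUnion.mpr ⟨nn, ⟨cc, rfl⟩⟩
    have h3 := (h1.mono h2).closure
    rw [hφ.closure_eq] at h3
    exact TopologicalSpace.isSeparable_univ_iff.mp h3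
  have hsepR : TopologicalSpace.SeparableSpace (Lp ℝ p μ) := by
    have hsurj : Function.Surjective R := fun g => ⟨J g, hJid g⟩
    exact hsurj.denseRange.separableSpace R.continuous
  obtain ⟨D, hDc, hDd⟩ := TopologicalSpace.exists_countable_dense (Lp ℝ p μ)
  set zmap : ℝ → ℂ := fun t => Complex.exp (Real.arctan t * Complex.I) with hzmap
  have hzn : ∀ t, ‖zmap t‖ = 1 := fun t => by
    rw [hzmap]
    exact Complex.norm_exp_ofReal_mul_I _
  set Bad : Set ℝ := {t | ¬ Dense (S (zmap t))} with hBad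
  have hchoice : ∀ t ∈ Bad, ∃ d ∈ D, d ∉ closure (S (zmap t)) := by
    intro t ht
    have hne : ((closure (S (zmap t)))ᶜ).Nonempty := by
      rw [Set.nonempty_compl]
      exact fun hcl => ht (dense_iff_closure_eq.mpr hcl)
    obtain ⟨d, hd1, hd2⟩ := hDd.exists_mem_open isClosed_closure.isOpen_compl hne
    exact ⟨d, hd1, hd2⟩
  choose dfun hdD hdnc using hchoice
  have hinj : ∀ t (ht : t ∈ Bad), ∀ s' (hs' : s' ∈ Bad), dfun t ht = dfun s' hs' → t = s' := by
    intro t ht s' hs' heq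
    have hgne : dfun t ht ≠ 0 := by
      intro h0
      apply hdnc t ht
      rw [h0]
      exact subset_closure (h0S (zmap t))
    obtain ⟨w, hw1, hw⟩ := hE (dfun t ht) hgne
    have ht1 : (zmap t * (starRingEnd ℂ) w).re = 0 := by
      by_contra hcon
      exact hdnc t ht (hw (zmap t) (hzn t) hcon)
    have ht2 : (zmap s' * (starRingEnd ℂ) w).re = 0 := by
      by_contra hcon
      have hmem := hw (zmap s') (hzn s') hcon
      rw [heq] at hmem
      exact hdnc s' hs' hmem
    exact zmap_inj hw1 ht1 ht2
  have hBadc : Bad.Countable := by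
    have hsub : Bad ⊆ ⋃ x ∈ D, {t | ∃ ht : t ∈ Bad, dfun t ht = x} := by
      intro t ht
      exact Set.mem_biUnion (hdD t ht) ⟨ht, rfl⟩
    apply Set.Countable.mono hsub
    apply Set.Countable.biUnion hDc
    intro x _
    apply Set.Subsingleton.countable
    rintro a ⟨ha, hax⟩ b ⟨hb, hbx⟩
    exact hinj a ha b hb (hax.trans hbx.symm)
  obtain ⟨t, ht⟩ : ∃ t : ℝ, t ∉ Bad := by
    by_contra hcon
    push_neg at hcon
    have huniv : Bad = Set.univ := Set.eq_univ_of_forall hcon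
    rw [huniv] at hBadc
    exact Cardinal.not_countable_real hBadc
  have hdense : Dense (S (zmap t)) := not_not.mp ht
  exact ⟨ψf (zmap t), hdense⟩
end

section
/- If the real composition operator T̃_f : L^p(X;ℝ) → L^p(X;ℝ) is weakly mixing (i.e., T̃_f × T̃_f is hypercyclic on L^p(X;ℝ) × L^p(X;ℝ)), then the complex composition operator T_f : L^p(X;ℂ) → L^p(X;ℂ) is hypercyclic. Moreover, if (φ₁, φ₂) is a hypercyclic vector for T̃_f × T̃_f, then φ₁ + iφ₂ is a hypercyclic vector for T_f. -/
open MeasureTheory Filter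
open scoped ENNReal NNReal

/-- If `T̃_f` is weakly mixing on `L^p(X;ℝ)` (i.e. `T̃_f × T̃_f` is hypercyclic),
then `T_f` is hypercyclic on `L^p(X;ℂ)`; moreover if `(φ₁, φ₂)` is a hypercyclic vector for
`T̃_f × T̃_f`, then `φ₁ + i φ₂` is a hypercyclic vector for `T_f`. -/
theorem stmt2 {X : Type*} [MeasurableSpace X] (μ : Measure X) [SigmaFinite μ]
    (f : X → X) (hf : Measurable f)
    (hns : ∀ B : Set X, MeasurableSet B → μ B = 0 → μ (f ⁻¹' B) = 0)
    (p : ℝ≥0∞) [Fact (1 ≤ p)] (hp2 : p ≠ ⊤)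
    (Tc : Lp ℂ p μ →L[ℂ] Lp ℂ p μ)
    (hTc : ∀ φ : Lp ℂ p μ, (Tc φ : X → ℂ) =ᵐ[μ] (φ : X → ℂ) ∘ f)
    (Tr : Lp ℝ p μ →L[ℝ] Lp ℝ p μ)
    (hTr : ∀ φ : Lp ℝ p μ, (Tr φ : X → ℝ) =ᵐ[μ] (φ : X → ℝ) ∘ f)
    (φ₁ φ₂ : Lp ℝ p μ)
    (hwm : Dense {y : Lp ℝ p μ × Lp ℝ p μ |
      ∃ n : ℕ, 1 ≤ n ∧ y = ((Tr.prodMap Tr) ^ n) (φ₁, φ₂)})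
    (φ : Lp ℂ p μ)
    (hφ : ∀ᵐ x ∂μ, (φ : X → ℂ) x = Complex.mk ((φ₁ : X → ℝ) x) ((φ₂ : X → ℝ) x)) :
    Dense {ψ : Lp ℂ p μ | ∃ n : ℕ, 1 ≤ n ∧ ψ = (Tc ^ n) φ} := by
  classical
  -- transfer of a.e. equality along f, via nonsingularity
  have comp_ae : ∀ (g h : X → ℂ), g =ᵐ[μ] h → (g ∘ f) =ᵐ[μ] (h ∘ f) := by
    intro g h hgh
    obtain ⟨B, hsub, hBm, hB0⟩ := exists_measurable_superset_of_null (ae_iff.1 hgh)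
    have hB' : μ (f ⁻¹' B) = 0 := hns B hBm hB0
    refine ae_iff.2 (measure_mono_null ?_ hB')
    intro x hx
    exact hsub hx
  -- the ℝ-linear map (a, b) ↦ a + i b from Lp ℝ × Lp ℝ to Lp ℂ
  set A : Lp ℝ p μ →L[ℝ] Lp ℂ p μ := (Complex.ofRealCLM).compLpL p μ with hA
  set B : Lp ℝ p μ →L[ℝ] Lp ℂ p μ := (Complex.I • Complex.ofRealCLM).compLpL p μ with hB
  set J : Lp ℝ p μ × Lp ℝ p μ →L[ℝ] Lp ℂ p μ := A.coprod B with hJ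
  have Jae : ∀ y : Lp ℝ p μ × Lp ℝ p μ,
      (J y : X → ℂ) =ᵐ[μ] fun x => ((y.1 : X → ℝ) x : ℂ) + Complex.I * ((y.2 : X → ℝ) x) := by
    intro y
    have h1 := Complex.ofRealCLM.coeFn_compLpL (p := p) (μ := μ) y.1
    have h2 := (Complex.I • Complex.ofRealCLM).coeFn_compLpL (p := p) (μ := μ) y.2
    have h3 : (J y : X → ℂ) =ᵐ[μ] fun x => (A y.1 : X → ℂ) x + (B y.2 : X → ℂ) x := by
      have : J y = A y.1 + B y.2 := rfl
      rw [this]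
      exact Lp.coeFn_add _ _
    filter_upwards [h1, h2, h3] with x hx1 hx2 hx3
    simp only [hx3, hA, hB] at *
    rw [hx1, hx2]
    simp [smul_eq_mul]
  -- J intertwines Tr × Tr and Tc
  have key : ∀ y : Lp ℝ p μ × Lp ℝ p μ, J ((Tr.prodMap Tr) y) = Tc (J y) := by
    intro y
    refine Lp.ext ?_
    have l1 : (J ((Tr.prodMap Tr) y) : X → ℂ)
        =ᵐ[μ] fun x => ((Tr y.1 : X → ℝ) x : ℂ) + Complex.I * ((Tr y.2 : X → ℝ) x) :=
      Jae _
    have l2 : (fun x => ((Tr y.1 : X → ℝ) x : ℂ) + Complex.I * ((Tr y.2 : X → ℝ) x))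
        =ᵐ[μ] fun x => ((y.1 : X → ℝ) (f x) : ℂ) + Complex.I * ((y.2 : X → ℝ) (f x)) := by
      filter_upwards [hTr y.1, hTr y.2] with x hx1 hx2
      simp [hx1, hx2, Function.comp]
    have l3 : (Tc (J y) : X → ℂ) =ᵐ[μ] (J y : X → ℂ) ∘ f := hTc _
    have l4 : ((J y : X → ℂ) ∘ f)
        =ᵐ[μ] fun x => ((y.1 : X → ℝ) (f x) : ℂ) + Complex.I * ((y.2 : X → ℝ) (f x)) :=
      comp_ae _ _ (Jae y)
    exact (l1.trans l2).trans (l3.trans l4).symm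
  -- J sends (φ₁, φ₂) to φ
  have base : J (φ₁, φ₂) = φ := by
    refine Lp.ext ?_
    have := Jae (φ₁, φ₂)
    filter_upwards [this, hφ] with x hx1 hx2
    simp only [hx1, hx2, Complex.mk_eq_add_mul_I]
    ring
  -- orbits correspond
  have orbit : ∀ n : ℕ, J (((Tr.prodMap Tr) ^ n) (φ₁, φ₂)) = (Tc ^ n) φ := by
    intro n
    induction n with
    | zero => simpa using base
    | succ n ih =>
        rw [pow_succ', pow_succ']
        simp only [ContinuousLinearMap.mul_apply]
        rw [key, ih]
  -- right inverse of J
  have Jsurj : ∀ ψ : Lp ℂ p μ,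
      J (Complex.reCLM.compLpL p μ ψ, Complex.imCLM.compLpL p μ ψ) = ψ := by
    intro ψ
    refine Lp.ext ?_
    have h1 := Complex.reCLM.coeFn_compLpL (p := p) (μ := μ) ψ
    have h2 := Complex.imCLM.coeFn_compLpL (p := p) (μ := μ) ψ
    have h3 := Jae (Complex.reCLM.compLpL p μ ψ, Complex.imCLM.compLpL p μ ψ)
    filter_upwards [h1, h2, h3] with x hx1 hx2 hx3
    simp only [hx3]
    rw [hx1, hx2]
    simp only [Complex.reCLM_apply, Complex.imCLM_apply]
    rw [mul_comm, Complex.re_add_im]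
  -- conclude density
  rw [dense_iff_closure_eq, Set.eq_univ_iff_forall]
  intro ψ
  have hK : (Complex.reCLM.compLpL p μ ψ, Complex.imCLM.compLpL p μ ψ) ∈
      closure {y : Lp ℝ p μ × Lp ℝ p μ |
        ∃ n : ℕ, 1 ≤ n ∧ y = ((Tr.prodMap Tr) ^ n) (φ₁, φ₂)} := hwm _
  have : ψ ∈ closure (J '' {y : Lp ℝ p μ × Lp ℝ p μ |
      ∃ n : ℕ, 1 ≤ n ∧ y = ((Tr.prodMap Tr) ^ n) (φ₁, φ₂)}) := by
    rw [← Jsurj ψ]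
    exact (image_closure_subset_closure_image J.continuous) (Set.mem_image_of_mem _ hK)
  refine closure_mono ?_ this
  rintro _ ⟨y, ⟨n, hn, rfl⟩, rfl⟩
  exact ⟨n, hn, (orbit n)⟩
end

section
/- On a finite measure space, if the composition operator T_f on L^p(X;𝕂) is ℝ₊-supercyclic, then for every ε > 0 there exist a measurable set A ⊆ X and j ∈ ℕ such that μ(X \ A) < ε, μ(f^{-j}(A)) < ε, and the outer measure μ*(f^j(A)) < ε. -/
open MeasureTheory Filter
open scoped ENNReal NNReal

set_option maxHeartbeats 1600000

/-- On a finite measure space, if the composition operator `T_f` on `L^p(X;𝕂)`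
is `ℝ₊`-supercyclic, then for every `ε > 0` there exist a measurable set `A` and `j ∈ ℕ`
with `μ(X \ A) < ε`, `μ(f^{-j}(A)) < ε` and outer measure `μ*(f^j(A)) < ε`. -/
theorem stmt5 {X : Type*} [MeasurableSpace X] (μ : Measure X) [IsFiniteMeasure μ]
    {𝕜 : Type*} [RCLike 𝕜]
    (f : X → X) (hf : Measurable f)
    (hns : ∀ B : Set X, MeasurableSet B → μ B = 0 → μ (f ⁻¹' B) = 0)
    (p : ℝ≥0∞) [Fact (1 ≤ p)] (hp2 : p ≠ ⊤)
    (T : Lp 𝕜 p μ →L[𝕜] Lp 𝕜 p μ)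
    (hT : ∀ φ : Lp 𝕜 p μ, (T φ : X → 𝕜) =ᵐ[μ] (φ : X → 𝕜) ∘ f)
    (hsc : ∃ φ : Lp 𝕜 p μ,
      Dense {y : Lp 𝕜 p μ | ∃ (l : ℝ) (n : ℕ), 0 < l ∧ 1 ≤ n ∧ y = ((l : 𝕜) • (T ^ n) φ)}) :
    ∀ ε : ℝ, 0 < ε → ∃ (A : Set X) (j : ℕ), MeasurableSet A ∧
      μ Aᶜ < ENNReal.ofReal ε ∧
      μ ((f^[j]) ⁻¹' A) < ENNReal.ofReal ε ∧
      μ ((f^[j]) '' A) < ENNReal.ofReal ε := by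
  intro ε hε
  have hεE : (0 : ℝ≥0∞) < ENNReal.ofReal ε := ENNReal.ofReal_pos.2 hε
  obtain ⟨φ, hd⟩ := hsc
  by_cases hμ : μ Set.univ = 0
  · refine ⟨∅, 0, MeasurableSet.empty, ?_, ?_, ?_⟩
    · simpa [hμ] using hεE
    · simpa using hεE
    · simpa using hεE
  -- basic facts about p
  have hp1 : (1 : ℝ≥0∞) ≤ p := Fact.out
  have hp0 : p ≠ 0 := by
    intro h; rw [h] at hp1; exact (by norm_num : ¬ ((1:ℝ≥0∞) ≤ 0)) hp1
  have hpt1 : 1 ≤ p.toReal := by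
    have := ENNReal.toReal_mono hp2 hp1
    simpa using this
  -- measurable representative of φ
  have hφm := Lp.aestronglyMeasurable φ
  set φt : X → 𝕜 := hφm.mk (φ : X → 𝕜) with hφt
  have hφtsm : StronglyMeasurable φt := hφm.stronglyMeasurable_mk
  have hφae : (φ : X → 𝕜) =ᵐ[μ] φt := hφm.ae_eq_mk
  -- composition with f preserves a.e. equality (nonsingularity)
  have hcomp : ∀ (g₁ g₂ : X → 𝕜), g₁ =ᵐ[μ] g₂ →
      (fun x => g₁ (f x)) =ᵐ[μ] fun x => g₂ (f x) := by
    intro g₁ g₂ h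
    have h0 : μ {x | ¬ g₁ x = g₂ x} = 0 := ae_iff.1 h
    obtain ⟨N, hNsub, hNmeas, hN0⟩ := exists_measurable_superset_of_null h0
    have hpre : μ (f ⁻¹' N) = 0 := hns N hNmeas hN0
    refine ae_iff.2 (measure_mono_null ?_ hpre)
    intro x hx
    exact hNsub hx
  -- orbit representation
  have horb : ∀ n : ℕ, ((T ^ n) φ : X → 𝕜) =ᵐ[μ] fun x => φt (f^[n] x) := by
    intro n
    induction n with
    | zero => simpa using hφae
    | succ n ih =>
      have hstep : (T ^ (n + 1)) φ = T ((T ^ n) φ) := by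
        rw [pow_succ']; rfl
      have h1 : ((T ^ (n + 1)) φ : X → 𝕜) =ᵐ[μ] fun x => ((T ^ n) φ : X → 𝕜) (f x) := by
        rw [hstep]; exact hT ((T ^ n) φ)
      have h2 := hcomp _ _ ih
      refine h1.trans (h2.trans (Filter.EventuallyEq.of_eq ?_))
      funext x
      rw [Function.iterate_succ_apply]
  -- the constant function 1 in Lp
  set one : Lp 𝕜 p μ := (memLp_const (1 : 𝕜)).toLp (fun _ => (1 : 𝕜)) with hone
  have hone_ae : (one : X → 𝕜) =ᵐ[μ] fun _ => (1 : 𝕜) := MemLp.coeFn_toLp _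
  set c : ℝ := ‖one‖ with hcdef
  have hc : 0 < c := by
    rw [hcdef, norm_pos_iff]
    intro h0
    have hz : (fun _ : X => (1 : 𝕜)) =ᵐ[μ] (0 : X → 𝕜) := by
      refine hone_ae.symm.trans ?_
      rw [h0]
      exact Lp.coeFn_zero 𝕜 p μ
    have := ae_iff.1 hz
    simp only [Pi.zero_apply, one_ne_zero, not_false_iff] at this
    simp only [Set.setOf_true] at this
    exact hμ this
  -- choice of δ
  set δ : ℝ := min c (min 1 (ε / 4)) / 2 with hδdef
  have hmpos : 0 < min c (min 1 (ε / 4)) := lt_min hc (lt_min one_pos (by linarith))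
  have hδpos : 0 < δ := by rw [hδdef]; linarith
  have hδc : δ < c := by
    have h1 : min c (min 1 (ε / 4)) ≤ c := min_le_left _ _
    rw [hδdef]; linarith
  have h2δ : 2 * δ ≤ min 1 (ε / 4) := by
    have h1 : min c (min 1 (ε / 4)) ≤ min 1 (ε / 4) := min_le_right _ _
    rw [hδdef]; linarith
  -- approximation from density
  have happrox : ∀ ψ : Lp 𝕜 p μ, ∃ (l : ℝ) (n : ℕ), 0 < l ∧ 1 ≤ n ∧
      ‖(l : 𝕜) • (T ^ n) φ - ψ‖ < δ := by
    intro ψ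
    have hmem := hd ψ
    rw [Metric.mem_closure_iff] at hmem
    obtain ⟨y, hyS, hyd⟩ := hmem δ hδpos
    obtain ⟨l, n, hl, hn, rfl⟩ := hyS
    exact ⟨l, n, hl, hn, by rwa [dist_comm, dist_eq_norm] at hyd⟩
  obtain ⟨l, n, hl, hn1, hφ1⟩ := happrox one
  obtain ⟨l', m, hl', hm1, hφ2'⟩ := happrox (-one)
  have hφ2 : ‖(l' : 𝕜) • (T ^ m) φ + one‖ < δ := by rwa [sub_neg_eq_add] at hφ2'
  -- n ≠ m
  have hnm : n ≠ m := by
    intro hEq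
    subst hEq
    set v : Lp 𝕜 p μ := (l : 𝕜) • (T ^ n) φ with hv
    set a : ℝ := l' / l with ha
    have hapos : 0 < a := div_pos hl' hl
    have hv2 : (l' : 𝕜) • (T ^ n) φ = (a : 𝕜) • v := by
      rw [hv, smul_smul, ← RCLike.ofReal_mul, ha, div_mul_cancel₀ _ (ne_of_gt hl)]
    have hkey : (a : 𝕜) • one + one = (a : 𝕜) • (one - v) + ((a : 𝕜) • v + one) := by
      rw [smul_sub]; abel
    have hnorm1 : ‖(a : 𝕜) • one + one‖ = (a + 1) * c := by
      have h1 : (a : 𝕜) • one + one = ((a + 1 : ℝ) : 𝕜) • one := by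
        push_cast
        rw [add_smul, one_smul]
      rw [h1, norm_smul, RCLike.norm_ofReal, abs_of_pos (by linarith)]
    have hb1 : ‖one - v‖ < δ := by rwa [norm_sub_rev]
    have hb2 : ‖(a : 𝕜) • v + one‖ < δ := by rwa [hv2] at hφ2
    have hle : ‖(a : 𝕜) • one + one‖ ≤ ‖(a : 𝕜) • (one - v)‖ + ‖(a : 𝕜) • v + one‖ := by
      rw [hkey]; exact norm_add_le _ _
    rw [hnorm1, norm_smul, RCLike.norm_ofReal, abs_of_pos hapos] at hle
    nlinarith
  -- the two measurable comparison functions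
  set g₁ : X → 𝕜 := fun x => (l : 𝕜) * φt (f^[n] x) - 1 with hg₁
  set g₂ : X → 𝕜 := fun x => (l' : 𝕜) * φt (f^[m] x) + 1 with hg₂
  have hg₁sm : StronglyMeasurable g₁ :=
    (stronglyMeasurable_const.mul (hφtsm.comp_measurable (hf.iterate n))).sub
      stronglyMeasurable_const
  have hg₂sm : StronglyMeasurable g₂ :=
    (stronglyMeasurable_const.mul (hφtsm.comp_measurable (hf.iterate m))).add
      stronglyMeasurable_const
  -- identify with Lp elements a.e.
  have he₁ : (((l : 𝕜) • (T ^ n) φ - one : Lp 𝕜 p μ) : X → 𝕜) =ᵐ[μ] g₁ := by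
    filter_upwards [Lp.coeFn_sub ((l : 𝕜) • (T ^ n) φ) one,
      Lp.coeFn_smul (l : 𝕜) ((T ^ n) φ), horb n, hone_ae] with x h1 h2 h3 h4
    rw [h1, Pi.sub_apply, h2, Pi.smul_apply, smul_eq_mul, h3, h4]
  have he₂ : (((l' : 𝕜) • (T ^ m) φ + one : Lp 𝕜 p μ) : X → 𝕜) =ᵐ[μ] g₂ := by
    filter_upwards [Lp.coeFn_add ((l' : 𝕜) • (T ^ m) φ) one,
      Lp.coeFn_smul (l' : 𝕜) ((T ^ m) φ), horb m, hone_ae] with x h1 h2 h3 h4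
    rw [h1, Pi.add_apply, h2, Pi.smul_apply, smul_eq_mul, h3, h4]
  have hsn₁ : eLpNorm g₁ p μ ≤ ENNReal.ofReal δ := by
    rw [← eLpNorm_congr_ae he₁]
    refine le_of_lt ((ENNReal.lt_ofReal_iff_toReal_lt (Lp.eLpNorm_ne_top _)).2 ?_)
    rw [← Lp.norm_def]
    exact hφ1
  have hsn₂ : eLpNorm g₂ p μ ≤ ENNReal.ofReal δ := by
    rw [← eLpNorm_congr_ae he₂]
    refine le_of_lt ((ENNReal.lt_ofReal_iff_toReal_lt (Lp.eLpNorm_ne_top _)).2 ?_)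
    rw [← Lp.norm_def]
    exact hφ2
  -- Chebyshev bound
  have hcheb : ∀ g : X → 𝕜, StronglyMeasurable g → eLpNorm g p μ ≤ ENNReal.ofReal δ →
      μ {x | (1 : ℝ) / 2 ≤ ‖g x‖} ≤ ENNReal.ofReal (ε / 4) := by
    intro g hsm hle
    have hh := meas_ge_le_mul_pow_eLpNorm_enorm μ hp0 hp2 hsm.aestronglyMeasurable
      (ε := ENNReal.ofReal (1 / 2)) (ENNReal.ofReal_pos.2 (by norm_num)).ne'
        (fun h => absurd h ENNReal.ofReal_ne_top)
    have hset : {x | (1 : ℝ) / 2 ≤ ‖g x‖} = {x | ENNReal.ofReal (1 / 2) ≤ (‖g x‖₊ : ℝ≥0∞)} := by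
      ext x
      simp only [Set.mem_setOf_eq, ← enorm_eq_nnnorm, ← ofReal_norm]
      rw [ENNReal.ofReal_le_ofReal_iff (norm_nonneg _)]
    rw [hset]
    refine hh.trans ?_
    have hb : (ENNReal.ofReal (1 / 2))⁻¹ ^ p.toReal * eLpNorm g p μ ^ p.toReal ≤
        (ENNReal.ofReal 2) ^ p.toReal * (ENNReal.ofReal δ) ^ p.toReal := by
      have h1 : (ENNReal.ofReal (1 / 2))⁻¹ = ENNReal.ofReal 2 := by
        rw [← ENNReal.ofReal_inv_of_pos (by norm_num : (0:ℝ) < 1/2)]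
        norm_num
      rw [h1]
      exact mul_le_mul_right (ENNReal.rpow_le_rpow hle (by linarith)) _
    refine hb.trans ?_
    rw [← ENNReal.mul_rpow_of_nonneg _ _ (by linarith),
      ← ENNReal.ofReal_mul (by norm_num : (0:ℝ) ≤ 2),
      ENNReal.ofReal_rpow_of_nonneg (by linarith) (by linarith)]
    refine ENNReal.ofReal_le_ofReal ?_
    have h2d : 0 < 2 * δ := by linarith
    have h2d1 : 2 * δ ≤ 1 := le_trans h2δ (min_le_left _ _)
    have h2d2 : 2 * δ ≤ ε / 4 := le_trans h2δ (min_le_right _ _)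
    calc (2 * δ) ^ p.toReal ≤ (2 * δ) ^ (1 : ℝ) :=
          Real.rpow_le_rpow_of_exponent_ge h2d h2d1 hpt1
      _ = 2 * δ := Real.rpow_one _
      _ ≤ ε / 4 := h2d2
  -- the bad sets
  set B₁ : Set X := {x | (1 : ℝ) / 2 ≤ ‖g₁ x‖} with hB₁def
  set B₂ : Set X := {x | (1 : ℝ) / 2 ≤ ‖g₂ x‖} with hB₂def
  have hB₁meas : MeasurableSet B₁ := measurableSet_le measurable_const hg₁sm.norm.measurable
  have hB₂meas : MeasurableSet B₂ := measurableSet_le measurable_const hg₂sm.norm.measurable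
  have hB₁μ : μ B₁ ≤ ENNReal.ofReal (ε / 4) := hcheb g₁ hg₁sm hsn₁
  have hB₂μ : μ B₂ ≤ ENNReal.ofReal (ε / 4) := hcheb g₂ hg₂sm hsn₂
  have hε4 : ENNReal.ofReal (ε / 4) < ENNReal.ofReal ε :=
    (ENNReal.ofReal_lt_ofReal_iff hε).2 (by linarith)
  -- sign information
  have hre₁ : ∀ x, x ∉ B₁ → 1 / 2 < RCLike.re ((l : 𝕜) * φt (f^[n] x)) := by
    intro x hx
    have hx' : ‖g₁ x‖ < 1 / 2 := not_le.1 hx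
    have habs := RCLike.abs_re_le_norm (g₁ x)
    have hre : RCLike.re (g₁ x) = RCLike.re ((l : 𝕜) * φt (f^[n] x)) - 1 := by
      rw [hg₁]; simp [map_sub]
    rw [hre] at habs
    have hstr := abs_lt.1 (lt_of_le_of_lt habs hx')
    linarith [hstr.1]
  have hre₂ : ∀ x, x ∉ B₂ → RCLike.re ((l' : 𝕜) * φt (f^[m] x)) < -(1 / 2) := by
    intro x hx
    have hx' : ‖g₂ x‖ < 1 / 2 := not_le.1 hx
    have habs := RCLike.abs_re_le_norm (g₂ x)
    have hre : RCLike.re (g₂ x) = RCLike.re ((l' : 𝕜) * φt (f^[m] x)) + 1 := by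
      rw [hg₂]; simp [map_add]
    rw [hre] at habs
    have hstr := abs_lt.1 (lt_of_le_of_lt habs hx')
    linarith [hstr.2]
  -- the good set
  set A : Set X := B₁ᶜ ∩ B₂ᶜ with hAdef
  have hAmeas : MeasurableSet A := hB₁meas.compl.inter hB₂meas.compl
  have hAc : μ Aᶜ < ENNReal.ofReal ε := by
    have hAcompl : Aᶜ = B₁ ∪ B₂ := by
      rw [hAdef, Set.compl_inter, compl_compl, compl_compl]
    rw [hAcompl]
    refine lt_of_le_of_lt (measure_union_le _ _) ?_
    refine lt_of_le_of_lt (add_le_add hB₁μ hB₂μ) ?_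
    rw [← ENNReal.ofReal_add (by linarith) (by linarith)]
    exact (ENNReal.ofReal_lt_ofReal_iff hε).2 (by linarith)
  rcases lt_or_gt_of_ne hnm with hlt | hlt
  · -- n < m, k = m - n
    set k : ℕ := m - n with hk
    have hkm : n + k = m := by omega
    have hkey : ∀ x, (l : 𝕜) * φt (f^[n] (f^[k] x)) =
        ((l / l' : ℝ) : 𝕜) * ((l' : 𝕜) * φt (f^[m] x)) := by
      intro x
      have h1 : f^[n] (f^[k] x) = f^[m] x := by
        rw [← Function.iterate_add_apply, hkm]
      rw [h1, ← mul_assoc, ← RCLike.ofReal_mul, div_mul_cancel₀ _ (ne_of_gt hl')]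
    have himg : ∀ x ∈ A, f^[k] x ∈ B₁ := by
      intro x hx
      by_contra hcon
      have h1 := hre₁ _ hcon
      have h2 := hre₂ x hx.2
      rw [hkey x, RCLike.re_ofReal_mul] at h1
      nlinarith [div_pos hl hl']
    have hpre : ∀ x, f^[k] x ∈ A → x ∈ B₂ := by
      intro x hx
      by_contra hcon
      have h2 := hre₂ x hcon
      have h1 := hre₁ _ hx.1
      rw [hkey x, RCLike.re_ofReal_mul] at h1
      nlinarith [div_pos hl hl']
    refine ⟨A, k, hAmeas, hAc, ?_, ?_⟩
    · refine lt_of_le_of_lt (measure_mono ?_) (lt_of_le_of_lt hB₂μ hε4)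
      intro x hx
      exact hpre x hx
    · refine lt_of_le_of_lt (measure_mono ?_) (lt_of_le_of_lt hB₁μ hε4)
      rw [Set.image_subset_iff]
      intro x hx
      exact himg x hx
  · -- m < n, k = n - m
    set k : ℕ := n - m with hk
    have hkm : m + k = n := by omega
    have hkey : ∀ x, (l' : 𝕜) * φt (f^[m] (f^[k] x)) =
        ((l' / l : ℝ) : 𝕜) * ((l : 𝕜) * φt (f^[n] x)) := by
      intro x
      have h1 : f^[m] (f^[k] x) = f^[n] x := by
        rw [← Function.iterate_add_apply, hkm]
      rw [h1, ← mul_assoc, ← RCLike.ofReal_mul, div_mul_cancel₀ _ (ne_of_gt hl)]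
    have himg : ∀ x ∈ A, f^[k] x ∈ B₂ := by
      intro x hx
      by_contra hcon
      have h2 := hre₂ _ hcon
      have h1 := hre₁ x hx.1
      rw [hkey x, RCLike.re_ofReal_mul] at h2
      nlinarith [div_pos hl' hl]
    have hpre : ∀ x, f^[k] x ∈ A → x ∈ B₁ := by
      intro x hx
      by_contra hcon
      have h1 := hre₁ x hcon
      have h2 := hre₂ _ hx.2
      rw [hkey x, RCLike.re_ofReal_mul] at h2
      nlinarith [div_pos hl' hl]
    refine ⟨A, k, hAmeas, hAc, ?_, ?_⟩
    · refine lt_of_le_of_lt (measure_mono ?_) (lt_of_le_of_lt hB₁μ hε4)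
      intro x hx
      exact hpre x hx
    · refine lt_of_le_of_lt (measure_mono ?_) (lt_of_le_of_lt hB₂μ hε4)
      rw [Set.image_subset_iff]
      intro x hx
      exact himg x hx
end
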